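/- Let M = [a,b) and N = [c,d) be interval modules (0 ≤ a < b, 0 ≤ c < d). Define σ' = sup S_{M,N} if S_{M,N} ≠ ∅ and σ' = 0 otherwise, and τ' = sup S_{N,M} if S_{N,M} ≠ ∅ and τ' = 0 otherwise. Then max{|a−d|, |b−c|} = max{σ', τ'}; that is, max{|a−d|,|b−c|} is the parameter value at which the last homomorphism between M and N dies. -/

import Mathlib

open scoped NNReal

/-- A persistence module: a functor from `[0,∞)` to real vector spaces. -/
structure PM where
  V : ℝ≥0 → Type
  [grp : ∀ x, AddCommGroup (V x)]
  [mod : ∀ x, Module ℝ (V x)]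
  map : ∀ {x y : ℝ≥0}, x ≤ y → (V x →ₗ[ℝ] V y)
  map_id : ∀ x : ℝ≥0, map (le_refl x) = LinearMap.id
  map_comp : ∀ {x y z : ℝ≥0} (h1 : x ≤ y) (h2 : y ≤ z),
    (map h2).comp (map h1) = map (h1.trans h2)

attribute [instance] PM.grp PM.mod

/-- A morphism of persistence modules. -/
structure PM.Hom (M N : PM) where
  app : ∀ x : ℝ≥0, M.V x →ₗ[ℝ] N.V x
  comm : ∀ {x y : ℝ≥0} (h : x ≤ y), (app y).comp (M.map h) = (N.map h).comp (app x)

/-- The shifted module `M·ε`. -/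
def PM.shift (M : PM) (ε : ℝ≥0) : PM where
  V x := M.V (x + ε)
  grp x := inferInstance
  mod x := inferInstance
  map h := M.map (add_le_add h (le_refl ε))
  map_id x := M.map_id (x + ε)
  map_comp h1 h2 := M.map_comp _ _

noncomputable def intervalSub (α β : ℝ) (x : ℝ≥0) : Submodule ℝ ℝ :=
  if α ≤ (x : ℝ) ∧ (x : ℝ) < β then ⊤ else ⊥

/-- The interval module `[α,β)`. -/
noncomputable def intervalModule (α β : ℝ) : PM where
  V x := ↥(intervalSub α β x)
  grp x := inferInstance
  mod x := inferInstance
  map {x y} h := LinearMap.codRestrict _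
      ((if α ≤ (x : ℝ) ∧ (y : ℝ) < β then (1 : ℝ) else 0) • (intervalSub α β x).subtype)
      (by
        intro v
        by_cases hy : α ≤ (y : ℝ) ∧ (y : ℝ) < β
        · simp [intervalSub, hy]
        · have hc : ¬(α ≤ (x : ℝ) ∧ (y : ℝ) < β) := by
            intro hc
            exact hy ⟨le_trans hc.1 (by exact_mod_cast h), hc.2⟩
          rw [if_neg hc, zero_smul]
          exact Submodule.zero_mem _)
  map_id x := by
    ext v
    by_cases hx : α ≤ (x : ℝ) ∧ (x : ℝ) < β
    · simp [hx]
    · have hv : (v : ℝ) = 0 := by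
        have h2 := v.2
        simp only [intervalSub, if_neg hx, Submodule.mem_bot] at h2
        exact h2
      simp [hx, hv]
  map_comp {x y z} h1 h2 := by
    ext v
    by_cases hC : α ≤ (x : ℝ) ∧ (z : ℝ) < β
    · have hA : α ≤ (x : ℝ) ∧ (y : ℝ) < β :=
        ⟨hC.1, lt_of_le_of_lt (by exact_mod_cast h2) hC.2⟩
      have hB : α ≤ (y : ℝ) ∧ (z : ℝ) < β :=
        ⟨le_trans hC.1 (by exact_mod_cast h1), hC.2⟩
      simp [hA, hB, hC]
    · rcases not_and_or.mp hC with hx | hz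
      · have hA : ¬(α ≤ (x : ℝ) ∧ (y : ℝ) < β) := fun h => hx h.1
        simp [hA, hC]
        split_ifs <;> simp
      · have hB : ¬(α ≤ (y : ℝ) ∧ (z : ℝ) < β) := fun h => hz h.2
        simp [hB, hC]

/-- `Hom(M,N) ≠ {0}`: there is a nonzero morphism from `M` to `N`. -/
def HomNeZero (M N : PM) : Prop := ∃ F : PM.Hom M N, ∃ x, F.app x ≠ 0

/-- `S_{M,N} = {x ≥ 0 : Hom(M, N·x) ≠ {0}}`. -/
noncomputable def Sset (M N : PM) : Set ℝ :=
  {x : ℝ | 0 ≤ x ∧ HomNeZero M (N.shift x.toNNReal)}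

/-- The canonical morphism `Π_M^{M·τ} : M → M·τ`. -/
def PM.pi (M : PM) (τ : ℝ≥0) : M.Hom (M.shift τ) where
  app x := M.map le_self_add
  comm {x y} h := by
    show (M.map le_self_add).comp (M.map h) =
      (M.map (add_le_add h (le_refl τ))).comp (M.map le_self_add)
    rw [M.map_comp, M.map_comp]

/-- The pair `(Φ, Ψ)` is an `ε`-interleaving between `M` and `N`:
`(Ψ·ε) ∘ Φ = Π_M^{M·2ε}` and `(Φ·ε) ∘ Ψ = Π_N^{N·2ε}` (expressed pointwise). -/
def IsInterleaving (M N : PM) (ε : ℝ≥0)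
    (Φ : M.Hom (N.shift ε)) (Ψ : N.Hom (M.shift ε)) : Prop :=
  (∀ x : ℝ≥0, (Ψ.app (x + ε)).comp (Φ.app x) =
      M.map (le_self_add.trans le_self_add : x ≤ x + ε + ε)) ∧
  (∀ x : ℝ≥0, (Φ.app (x + ε)).comp (Ψ.app x) =
      N.map (le_self_add.trans le_self_add : x ≤ x + ε + ε))

section Aux

open scoped NNReal

lemma eq_zero_of_not_mem_interval {α β : ℝ} {x : ℝ≥0} (v : ↥(intervalSub α β x))
    (h : ¬(α ≤ (x:ℝ) ∧ (x:ℝ) < β)) : v = 0 := by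
  have h2 := v.2
  simp only [intervalSub, if_neg h, Submodule.mem_bot] at h2
  exact Subtype.ext h2

lemma intervalSub_eq_top {α β : ℝ} {x : ℝ≥0} (h1 : α ≤ (x:ℝ)) (h2 : (x:ℝ) < β) :
    intervalSub α β x = ⊤ := by
  simp only [intervalSub]
  rw [if_pos ⟨h1, h2⟩]

lemma coe_im_map (α β : ℝ) {x y : ℝ≥0} (h : x ≤ y) (v : ↥(intervalSub α β x)) :
    ((intervalModule α β).map h v).val
      = (if α ≤ (x:ℝ) ∧ (y:ℝ) < β then (1:ℝ) else 0) * v.val := rfl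

lemma coe_shift_map (c d : ℝ) (t : ℝ≥0) {x y : ℝ≥0} (h : x ≤ y)
    (v : ↥(intervalSub c d (x+t))) :
    (((intervalModule c d).shift t).map h v).val
      = (if c ≤ (x:ℝ)+(t:ℝ) ∧ (y:ℝ)+(t:ℝ) < d then (1:ℝ) else 0) * v.val := by
  have h0 : (((intervalModule c d).shift t).map h v).val
      = ((intervalModule c d).map (add_le_add h (le_refl t)) v).val := rfl
  rw [h0, coe_im_map]
  push_cast
  rfl

/-- The canonical nonzero morphism `[a,b) → [c,d)·t` when `c ≤ a+t` and `d ≤ b+t`. -/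
noncomputable def ihApp (a b c d : ℝ) (t : ℝ≥0) (hca : c ≤ a + (t:ℝ)) (x : ℝ≥0) :
    ↥(intervalSub a b x) →ₗ[ℝ] ↥(intervalSub c d (x+t)) :=
  LinearMap.codRestrict (intervalSub c d (x+t))
    ((if a ≤ (x:ℝ) ∧ ((x:ℝ)+(t:ℝ)) < d then (1:ℝ) else 0) • (intervalSub a b x).subtype)
    (by
      intro v
      by_cases h : a ≤ (x:ℝ) ∧ ((x:ℝ)+(t:ℝ)) < d
      · have hm : intervalSub c d (x+t) = ⊤ := by
          apply intervalSub_eq_top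
          · push_cast; linarith [h.1]
          · push_cast; exact h.2
        rw [hm]; trivial
      · rw [if_neg h, zero_smul]
        exact Submodule.zero_mem _)

lemma ihApp_val (a b c d : ℝ) (t : ℝ≥0) (hca : c ≤ a + (t:ℝ)) (x : ℝ≥0)
    (v : ↥(intervalSub a b x)) :
    (ihApp a b c d t hca x v).val
      = (if a ≤ (x:ℝ) ∧ ((x:ℝ)+(t:ℝ)) < d then (1:ℝ) else 0) * v.val := rfl

noncomputable def intervalHom (a b c d : ℝ) (t : ℝ≥0) (hca : c ≤ a + (t:ℝ))
    (hdb : d ≤ b + (t:ℝ)) :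
    PM.Hom (intervalModule a b) ((intervalModule c d).shift t) where
  app x := ihApp a b c d t hca x
  comm {x y} h := by
    ext v
    refine Subtype.ext ?_
    show (ihApp a b c d t hca y ((intervalModule a b).map h v)).val
      = ((((intervalModule c d).shift t).map h) (ihApp a b c d t hca x v)).val
    erw [ihApp_val, coe_im_map, coe_shift_map, ihApp_val]
    have hxy : (x:ℝ) ≤ (y:ℝ) := NNReal.coe_le_coe.mpr h
    by_cases hv : a ≤ (x:ℝ) ∧ (x:ℝ) < b
    · by_cases hyd : (y:ℝ) + (t:ℝ) < d
      · rw [if_pos ⟨le_trans hv.1 hxy, hyd⟩, if_pos ⟨hv.1, by linarith⟩,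
          if_pos ⟨by linarith [hv.1], hyd⟩, if_pos ⟨hv.1, by linarith⟩]
      · rw [if_neg (show ¬(a ≤ (y:ℝ) ∧ (y:ℝ)+(t:ℝ) < d) from fun hh => hyd hh.2),
          if_neg (show ¬(c ≤ (x:ℝ)+(t:ℝ) ∧ (y:ℝ)+(t:ℝ) < d) from fun hh => hyd hh.2)]
        ring
    · have hv0 : v.val = 0 := congrArg Subtype.val (eq_zero_of_not_mem_interval v hv)
      rw [hv0]
      ring

lemma interval_hom_iff (a b c d : ℝ) (ha : 0 ≤ a) (hab : a < b) (hcd : c < d) (t : ℝ≥0) :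
    HomNeZero (intervalModule a b) ((intervalModule c d).shift t) ↔
      c ≤ a + (t:ℝ) ∧ a + (t:ℝ) < d ∧ d ≤ b + (t:ℝ) := by
  have hb : (0:ℝ) ≤ b := le_of_lt (lt_of_le_of_lt ha hab)
  constructor
  · rintro ⟨F, x0, hF⟩
    obtain ⟨v, hv⟩ : ∃ v, F.app x0 v ≠ 0 := by
      by_contra hcon
      push_neg at hcon
      exact hF (LinearMap.ext hcon)
    have hvne : v ≠ 0 := fun hh => hv (by rw [hh]; exact map_zero _)
    have hsrc : a ≤ (x0:ℝ) ∧ (x0:ℝ) < b := by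
      by_contra hcon
      exact hvne (eq_zero_of_not_mem_interval v hcon)
    have htgt : c ≤ ((x0+t : ℝ≥0):ℝ) ∧ ((x0+t : ℝ≥0):ℝ) < d := by
      by_contra hcon
      exact hv (eq_zero_of_not_mem_interval (F.app x0 v) hcon)
    push_cast at htgt
    refine ⟨?_, by linarith [hsrc.1, htgt.2], ?_⟩
    · -- c ≤ a + t
      by_contra hcon
      push_neg at hcon
      set xa : ℝ≥0 := ⟨a, ha⟩ with hxa
      have hcoe : (xa:ℝ) = a := rfl
      have hax : xa ≤ x0 := by
        rw [← NNReal.coe_le_coe, hcoe]; exact hsrc.1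
      have hmem : v.val ∈ intervalSub a b xa := by
        rw [intervalSub_eq_top (le_of_eq hcoe.symm) (by rw [hcoe]; exact hab)]
        trivial
      set v' : ↥(intervalSub a b xa) := ⟨v.val, hmem⟩ with hv'
      have hkey := congrArg (fun f => f v') (F.comm hax)
      simp only [LinearMap.coe_comp, Function.comp_apply] at hkey
      have hz : F.app xa v' = 0 := by
        apply eq_zero_of_not_mem_interval
        intro hh
        have h2 := hh.1
        push_cast at h2
        rw [hcoe] at h2
        linarith
      change F.app x0 ((intervalModule a b).map hax v') = ((intervalModule c d).shift t).map hax (F.app xa v') at hkey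
      rw [hz, map_zero] at hkey
      have hmv : (intervalModule a b).map hax v' = v := by
        refine Subtype.ext ?_
        show ((intervalModule a b).map hax v').val = v.val
        rw [coe_im_map, hcoe, if_pos ⟨le_refl a, hsrc.2⟩, one_mul]
      rw [hmv] at hkey
      exact hv hkey
    · -- d ≤ b + t
      by_contra hcon
      push_neg at hcon
      set yb : ℝ≥0 := ⟨b, hb⟩ with hyb
      have hcoe : (yb:ℝ) = b := rfl
      have hxy : x0 ≤ yb := by
        rw [← NNReal.coe_le_coe, hcoe]; exact le_of_lt hsrc.2
      have hkey := congrArg (fun f => f v) (F.comm hxy)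
      simp only [LinearMap.coe_comp, Function.comp_apply] at hkey
      have hmv : (intervalModule a b).map hxy v = 0 := by
        refine Subtype.ext ?_
        show ((intervalModule a b).map hxy v).val = (0:ℝ)
        erw [coe_im_map, hcoe, if_neg (fun hh => lt_irrefl b hh.2)]
        simp
      rw [hmv, map_zero] at hkey
      have hval := congrArg Subtype.val hkey.symm
      have hval2 : (((intervalModule c d).shift t).map hxy (F.app x0 v)).val = (0:ℝ) := hval
      erw [coe_shift_map, hcoe, if_pos ⟨htgt.1, by linarith⟩, one_mul] at hval2
      exact hv (Subtype.ext hval2)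
  · rintro ⟨hca, had, hdb⟩
    refine ⟨intervalHom a b c d t hca hdb, ⟨a, ha⟩, ?_⟩
    set xa : ℝ≥0 := ⟨a, ha⟩ with hxa
    have hcoe : (xa:ℝ) = a := rfl
    have hmem : (1:ℝ) ∈ intervalSub a b xa := by
      rw [intervalSub_eq_top (le_of_eq hcoe.symm) (by rw [hcoe]; exact hab)]
      trivial
    intro hzero
    have h1 : ((intervalHom a b c d t hca hdb).app xa ⟨1, hmem⟩).val
        = (if a ≤ (xa:ℝ) ∧ ((xa:ℝ)+(t:ℝ)) < d then (1:ℝ) else 0) * 1 := rfl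
    rw [hzero] at h1
    rw [hcoe, if_pos ⟨le_refl a, had⟩, one_mul] at h1
    exact (one_ne_zero : (1:ℝ) ≠ 0) (h1.symm.trans (rfl : _ = (0:ℝ)))

end Aux

section Aux3

open scoped NNReal

lemma Sset_interval (a b c d : ℝ) (ha : 0 ≤ a) (hab : a < b) (hcd : c < d) :
    Sset (intervalModule a b) (intervalModule c d)
      = {x : ℝ | 0 ≤ x ∧ c ≤ a + x ∧ a + x < d ∧ d ≤ b + x} := by
  ext x
  simp only [Sset, Set.mem_setOf_eq]
  constructor
  · rintro ⟨hx, h⟩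
    rw [interval_hom_iff a b c d ha hab hcd, Real.coe_toNNReal x hx] at h
    exact ⟨hx, h.1, h.2.1, h.2.2⟩
  · rintro ⟨hx, h1, h2, h3⟩
    refine ⟨hx, (interval_hom_iff a b c d ha hab hcd _).mpr ?_⟩
    rw [Real.coe_toNNReal x hx]
    exact ⟨h1, h2, h3⟩

lemma sigma_val (a b c d σ' : ℝ) (ha : 0 ≤ a) (hab : a < b) (hcd : c < d)
    (h1 : (Sset (intervalModule a b) (intervalModule c d)).Nonempty →
      IsLUB (Sset (intervalModule a b) (intervalModule c d)) σ')
    (h2 : ¬ (Sset (intervalModule a b) (intervalModule c d)).Nonempty → σ' = 0) :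
    σ' = if a < d then d - a else 0 := by
  rw [Sset_interval a b c d ha hab hcd] at h1 h2
  by_cases hAD : a < d
  · rw [if_pos hAD]
    have hset : {x : ℝ | 0 ≤ x ∧ c ≤ a + x ∧ a + x < d ∧ d ≤ b + x}
        = Set.Ico (max (max 0 (c-a)) (d-b)) (d-a) := by
      ext x
      simp only [Set.mem_setOf_eq, Set.mem_Ico, max_le_iff]
      constructor
      · rintro ⟨k1, k2, k3, k4⟩
        exact ⟨⟨⟨k1, by linarith⟩, by linarith⟩, by linarith⟩
      · rintro ⟨⟨⟨k1, k2⟩, k3⟩, k4⟩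
        exact ⟨k1, by linarith, by linarith, by linarith⟩
    have hlt : max (max 0 (c-a)) (d-b) < d - a := by
      rw [max_lt_iff, max_lt_iff]
      exact ⟨⟨by linarith, by linarith⟩, by linarith⟩
    rw [hset] at h1
    exact (h1 (Set.nonempty_Ico.mpr hlt)).unique (isLUB_Ico hlt)
  · rw [if_neg hAD]
    apply h2
    rintro ⟨x, hx1, hx2, hx3, hx4⟩
    exact hAD (by linarith)

end Aux3

theorem stmt4 (a b c d σ' τ' : ℝ) (ha : 0 ≤ a) (hab : a < b) (hc : 0 ≤ c) (hcd : c < d)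
    (hσ1 : (Sset (intervalModule a b) (intervalModule c d)).Nonempty → IsLUB (Sset (intervalModule a b) (intervalModule c d)) σ')
    (hσ2 : ¬ (Sset (intervalModule a b) (intervalModule c d)).Nonempty → σ' = 0)
    (hτ1 : (Sset (intervalModule c d) (intervalModule a b)).Nonempty → IsLUB (Sset (intervalModule c d) (intervalModule a b)) τ')
    (hτ2 : ¬ (Sset (intervalModule c d) (intervalModule a b)).Nonempty → τ' = 0) :
    max |a - d| |b - c| = max σ' τ' := by
  have hs := sigma_val a b c d σ' ha hab hcd hσ1 hσ2
  have ht := sigma_val c d a b τ' hc hcd hab hτ1 hτ2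
  by_cases h1 : a < d
  · by_cases h2 : c < b
    · rw [if_pos h1] at hs
      rw [if_pos h2] at ht
      rw [hs, ht, abs_of_nonpos (by linarith : a - d ≤ 0),
        abs_of_nonneg (by linarith : (0:ℝ) ≤ b - c), neg_sub]
    · rw [if_pos h1] at hs
      rw [if_neg h2] at ht
      rw [hs, ht, abs_of_nonpos (by linarith : a - d ≤ 0),
        abs_of_nonpos (by linarith : b - c ≤ 0), neg_sub, neg_sub,
        max_eq_left (by linarith : c - b ≤ d - a), max_eq_left (by linarith : (0:ℝ) ≤ d - a)]
  · by_cases h2 : c < b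
    · rw [if_neg h1] at hs
      rw [if_pos h2] at ht
      rw [hs, ht, abs_of_nonneg (by linarith : (0:ℝ) ≤ a - d),
        abs_of_nonneg (by linarith : (0:ℝ) ≤ b - c),
        max_eq_right (by linarith : a - d ≤ b - c), max_eq_right (by linarith : (0:ℝ) ≤ b - c)]
    · exfalso
      push_neg at h1 h2
      linarith
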